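/- Let q be a prime power and let M be a simple GF(q)-representable matroid with no coloops that has two distinct k-loose elements e and f. Then r(M) ≤ (q+1)(k-1) + 2q, or {e, f} is a cocircuit of M. -/

import Mathlib

namespace Matroid

variable {α : Type*}

/-- A circuit of a matroid is a minimal dependent set. -/
def Circuit (M : Matroid α) (C : Set α) : Prop :=
  M.Dep C ∧ ∀ D, D ⊂ C → M.Indep D

/-- A coloop is an element belonging to every basis. -/
def Coloop (M : Matroid α) (e : α) : Prop :=
  e ∈ M.E ∧ ∀ B, M.IsBase B → e ∈ B

/-- A matroid is simple if every subset of the ground set with at most two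
elements is independent. -/
def Simple (M : Matroid α) : Prop :=
  ∀ e ∈ M.E, ∀ f ∈ M.E, M.Indep {e, f}

/-- The rank of a matroid: the supremum of the cardinalities of its bases. -/
noncomputable def rk (M : Matroid α) : ℕ :=
  sSup {n | ∃ B, M.IsBase B ∧ B.ncard = n}

/-- A matroid is representable over a field `F` if independence in `M` coincides
with linear independence under some assignment of vectors to ground set elements. -/
def RepresentableOver (M : Matroid α) (F : Type) [Field F] : Prop :=
  ∃ (n : ℕ) (φ : α → (Fin n → F)),
    ∀ I, I ⊆ M.E → (M.Indep I ↔ LinearIndependent F (fun x : I => φ x))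

/-- An element `e` is `k`-loose if every circuit containing `e` has size
greater than `r - k`, where `r` is the rank of the matroid. -/
def KLoose (M : Matroid α) (k : ℕ) (e : α) : Prop :=
  e ∈ M.E ∧ ∀ C, M.Circuit C → e ∈ C → M.rk - k < C.ncard

/-- A matroid is `k`-paving if every element is `k`-loose. -/
def KPaving (M : Matroid α) (k : ℕ) : Prop :=
  ∀ e ∈ M.E, M.KLoose k e

end Matroid

namespace Matroid

variable {α : Type*}

/-- Every finite dependent set contains a circuit. -/
lemma dep_contains_circuit (M : Matroid α) :
    ∀ D : Finset α, M.Dep ↑D → ∃ C : Finset α, C ⊆ D ∧ M.Circuit ↑C := by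
  classical
  intro D
  induction D using Finset.strongInduction with
  | _ D ih =>
    intro hD
    by_cases h : ∃ D' ⊂ D, M.Dep ↑D'
    · obtain ⟨D', hss, hdep⟩ := h
      obtain ⟨C, hC1, hC2⟩ := ih D' hss hdep
      exact ⟨C, hC1.trans hss.subset, hC2⟩
    · push_neg at h
      refine ⟨D, Finset.Subset.refl D, hD, fun S hS => ?_⟩
      have hSfin : S.Finite := (D.finite_toSet).subset hS.subset
      have hScoe : (hSfin.toFinset : Set α) = S := hSfin.coe_toFinset
      have hsub : hSfin.toFinset ⊆ D := by
        intro a ha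
        have : a ∈ S := by rwa [← hScoe, Finset.mem_coe]
        exact_mod_cast hS.subset this
      have hne : hSfin.toFinset ≠ D := by
        intro hEq
        apply hS.ne
        rw [← hScoe, hEq]
      have hnotdep := h hSfin.toFinset (lt_of_le_of_ne hsub hne)
      have hSE : S ⊆ M.E := hS.subset.trans hD.subset_ground
      by_contra hind
      exact hnotdep ⟨fun hi => hind (by rwa [hScoe] at hi), by rwa [hScoe]⟩

/-- If `x` is `k`-loose, `T` is independent, `x ∉ T`, and `insert x T` is dependent,
then `T` must be large. -/
lemma kloose_bound (M : Matroid α) {k : ℕ} {x : α} (hx : M.KLoose k x)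
    (T : Finset α) (hT : M.Indep ↑T) (hxT : x ∉ T) (hdep : M.Dep (insert x ↑T)) :
    M.rk - k < T.card + 1 := by
  classical
  obtain ⟨C, hCsub, hC⟩ := M.dep_contains_circuit (insert x T)
    (by rw [Finset.coe_insert]; exact hdep)
  have hxC : x ∈ C := by
    by_contra hxc
    have hCT : (C : Set α) ⊆ ↑T := by
      intro a ha
      have haC : a ∈ C := by exact_mod_cast ha
      have := hCsub haC
      rcases Finset.mem_insert.1 this with h1 | h2
      · exact absurd (h1 ▸ haC) hxc
      · exact_mod_cast h2
    exact hC.1.not_indep (hT.subset hCT)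
  have hlt := hx.2 ↑C hC (by exact_mod_cast hxC)
  rw [Set.ncard_coe_finset] at hlt
  have hCcard : C.card ≤ T.card + 1 :=
    le_trans (Finset.card_le_card hCsub) (Finset.card_insert_le x T)
  omega

/-- For a finite matroid, `rk` equals the cardinality of any base. -/
lemma rk_eq_card (M : Matroid α) {B : Set α} (hB : M.IsBase B) : M.rk = B.ncard := by
  have hset : {n | ∃ B', M.IsBase B' ∧ B'.ncard = n} = {B.ncard} := by
    ext n
    constructor
    · rintro ⟨B', hB', rfl⟩
      exact hB'.ncard_eq_ncard_of_isBase hB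
    · rintro rfl
      exact ⟨B, hB, rfl⟩
  rw [Matroid.rk, hset, csSup_singleton]

/-- Main auxiliary lemma: if the rank is large, no base can avoid both `k`-loose
elements `e` and `f`. -/
lemma main_contradiction {α : Type*} (q k : ℕ)
    (F : Type) [Field F] [Fintype F] (hF : Fintype.card F = q)
    (M : Matroid α) [M.Finite]
    (hrep : M.RepresentableOver F)
    (e f : α) (hef : e ≠ f) (he : M.KLoose k e) (hf : M.KLoose k f)
    (B : Set α) (hB : M.IsBase B) (heB : e ∉ B) (hfB : f ∉ B)
    (hr : (q + 1) * k + q ≤ M.rk) : False := by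
  classical
  obtain ⟨n, φ, hφ⟩ := hrep
  have heE := he.1
  have hfE := hf.1
  have hq2 : 2 ≤ q := by rw [← hF]; exact Fintype.one_lt_card
  have hBE : B ⊆ M.E := hB.subset_ground
  have hBfin : B.Finite := M.ground_finite.subset hBE
  set Bf : Finset α := hBfin.toFinset with hBfdef
  have hBcoe : (Bf : Set α) = B := hBfin.coe_toFinset
  have hrk : M.rk = Bf.card := by
    rw [M.rk_eq_card hB, ← hBcoe, Set.ncard_coe_finset]
  set r : ℕ := Bf.card with hrdef
  have hBi : LinearIndependent F (fun x : ↑B => φ x) := (hφ B hBE).1 hB.indep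
  -- coordinates of a non-basis element with respect to B
  have coord : ∀ x, x ∈ M.E → x ∉ B → ∃ c : α → F, φ x = ∑ b ∈ Bf, c b • φ b := by
    intro x hxE hxB
    have hdep : M.Dep (insert x B) := hB.insert_dep ⟨hxE, hxB⟩
    have hnli : ¬ LinearIndependent F (fun y : ↑(insert x B) => φ y) := by
      intro hli
      exact hdep.not_indep ((hφ _ (Set.insert_subset hxE hBE)).2 hli)
    have hspan : φ x ∈ Submodule.span F (φ '' B) := by
      by_contra hsp
      exact hnli ((linearIndepOn_insert hxB).2 ⟨hBi, hsp⟩)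
    rw [Finsupp.mem_span_image_iff_linearCombination] at hspan
    obtain ⟨l, hlsupp, hl⟩ := hspan
    refine ⟨l, ?_⟩
    rw [← hl, Finsupp.linearCombination_apply, Finsupp.sum]
    refine Finset.sum_subset ?_ (fun b _ hb => by
      rw [Finsupp.notMem_support_iff.1 hb, zero_smul])
    intro b hb
    have : (b : α) ∈ B := (Finsupp.mem_supported F l).1 hlsupp hb
    rwa [← hBcoe, Finset.mem_coe] at this
  -- the support of the coordinates of a k-loose element is large
  have suppbig : ∀ (x : α) (c : α → F), x ∈ M.E → x ∉ B → M.KLoose k x →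
      φ x = ∑ b ∈ Bf, c b • φ b → r - k ≤ (Bf.filter (fun b => ¬ c b = 0)).card := by
    intro x c hxE hxB hx hxc
    set S : Finset α := Bf.filter (fun b => ¬ c b = 0) with hSdef
    have hsum : φ x = ∑ b ∈ S, c b • φ b := by
      rw [hxc]
      exact (Finset.sum_filter_of_ne (s := Bf) (f := fun b => c b • φ b)
        (p := fun b => ¬ c b = 0)
        (fun b _ hne h0 => hne (by simp [h0]))).symm
    have hSB : (S : Set α) ⊆ B := by
      rw [← hBcoe]
      exact_mod_cast Finset.filter_subset _ _
    have hSind : M.Indep ↑S := hB.indep.subset hSB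
    have hxS : x ∉ S := fun h => hxB (hSB (Finset.mem_coe.2 h))
    have hdep : M.Dep (insert x ↑S) := by
      refine ⟨?_, Set.insert_subset hxE (hSB.trans hBE)⟩
      intro hind
      have hli := (hφ _ (Set.insert_subset hxE (hSB.trans hBE))).1 hind
      have := ((linearIndepOn_insert (f := φ) hxS).1 hli).2
      apply this
      rw [hsum]
      exact Submodule.sum_smul_mem _ _ (fun b hb =>
        Submodule.subset_span (Set.mem_image_of_mem φ (Finset.mem_coe.2 hb)))
    have := M.kloose_bound hx S hSind hxS hdep
    rw [hrk] at this
    omega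
  obtain ⟨c, hc⟩ := coord e heE heB
  obtain ⟨d, hd⟩ := coord f hfE hfB
  have hce := suppbig e c heE heB he hc
  have hdf := suppbig f d hfE hfB hf hd
  -- counts of zero coordinates
  have hczero : (Bf.filter (fun b => c b = 0)).card ≤ k := by
    have h1 := Finset.card_filter_add_card_filter_not
      (s := Bf) (p := fun b => c b = 0)
    omega
  have hdzero : (Bf.filter (fun b => d b = 0)).card ≤ k := by
    have h1 := Finset.card_filter_add_card_filter_not
      (s := Bf) (p := fun b => d b = 0)
    omega
  -- pigeonhole over the q+1 projective directions
  have key : ∃ t : F, t ≠ 0 ∧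
      k + 2 ≤ (Bf.filter (fun b => ¬ c b = 0 ∧ d b = t * c b)).card := by
    by_contra hcon
    rw [not_exists] at hcon
    have hcon' : ∀ t : F, t ≠ 0 →
        (Bf.filter (fun b => ¬ c b = 0 ∧ d b = t * c b)).card ≤ k + 1 := by
      intro t ht
      by_contra hgt
      exact hcon t ⟨ht, by omega⟩
    have cover : Bf.filter (fun b => ¬ c b = 0) ⊆
        Finset.univ.biUnion (fun t : F =>
          Bf.filter (fun b => ¬ c b = 0 ∧ d b = t * c b)) := by
      intro b hb
      rw [Finset.mem_filter] at hb
      rw [Finset.mem_biUnion]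
      exact ⟨d b * (c b)⁻¹, Finset.mem_univ _,
        Finset.mem_filter.2 ⟨hb.1, hb.2, (inv_mul_cancel_right₀ hb.2 (d b)).symm⟩⟩
    have hcard : (Bf.filter (fun b => ¬ c b = 0)).card ≤
        ∑ t : F, (Bf.filter (fun b => ¬ c b = 0 ∧ d b = t * c b)).card :=
      le_trans (Finset.card_le_card cover) (Finset.card_biUnion_le)
    have h0le : (Bf.filter (fun b => ¬ c b = 0 ∧ d b = (0:F) * c b)).card ≤ k := by
      refine le_trans (Finset.card_le_card ?_) hdzero
      intro b hb
      rw [Finset.mem_filter] at hb ⊢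
      exact ⟨hb.1, by rw [hb.2.2, zero_mul]⟩
    have hsplit : ∑ t : F, (Bf.filter (fun b => ¬ c b = 0 ∧ d b = t * c b)).card =
        ∑ t ∈ Finset.univ.erase (0:F),
          (Bf.filter (fun b => ¬ c b = 0 ∧ d b = t * c b)).card
        + (Bf.filter (fun b => ¬ c b = 0 ∧ d b = (0:F) * c b)).card :=
      (Finset.sum_erase_add _ _ (Finset.mem_univ (0:F))).symm
    have herase : ∑ t ∈ Finset.univ.erase (0:F),
        (Bf.filter (fun b => ¬ c b = 0 ∧ d b = t * c b)).card ≤ (q - 1) * (k + 1) := by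
      calc ∑ t ∈ Finset.univ.erase (0:F),
          (Bf.filter (fun b => ¬ c b = 0 ∧ d b = t * c b)).card
          ≤ ∑ _t ∈ Finset.univ.erase (0:F), (k + 1) :=
            Finset.sum_le_sum (fun t ht => hcon' t (Finset.ne_of_mem_erase ht))
        _ = (q - 1) * (k + 1) := by
            rw [Finset.sum_const, smul_eq_mul, Finset.card_erase_of_mem (Finset.mem_univ _),
              Finset.card_univ, hF]
    rw [hrk] at hr
    obtain ⟨p, hp⟩ : ∃ p, q = p + 2 := ⟨q - 2, by omega⟩
    have e1 : (q - 1) * (k + 1) = p * k + p + k + 1 := by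
      subst hp
      have h : p + 2 - 1 = p + 1 := by omega
      rw [h]; ring
    have e2 : (q + 1) * k = p * k + 3 * k := by subst hp; ring
    have e3 : q = p + 2 := hp
    omega
  obtain ⟨t, ht0, hZ⟩ := key
  set Z : Finset α := Bf.filter (fun b => ¬ c b = 0 ∧ d b = t * c b) with hZdef
  have hZB : Z ⊆ Bf := Finset.filter_subset _ _
  have hZr : Z.card ≤ r := Finset.card_le_card hZB
  have hBZE : (↑(Bf \ Z) : Set α) ⊆ M.E := by
    refine Set.Subset.trans ?_ hBE
    rw [← hBcoe]
    exact_mod_cast Finset.sdiff_subset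
  have hBZind : M.Indep ↑(Bf \ Z) := by
    refine hB.indep.subset ?_
    rw [← hBcoe]
    exact_mod_cast Finset.sdiff_subset
  have heBZ : e ∉ Bf \ Z := by
    intro h
    exact heB (by rw [← hBcoe]; exact Finset.mem_coe.2 (Finset.sdiff_subset h))
  have hfBZ : f ∉ Bf \ Z := by
    intro h
    exact hfB (by rw [← hBcoe]; exact Finset.mem_coe.2 (Finset.sdiff_subset h))
  -- the key linear relation
  have h1 : ∑ b ∈ Bf, (d b - t * c b) • φ b = φ f - t • φ e := by
    simp only [sub_smul, mul_smul, Finset.sum_sub_distrib]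
    rw [← Finset.smul_sum, ← hc, ← hd]
  have h2 : ∑ b ∈ Bf, (d b - t * c b) • φ b = ∑ b ∈ Bf \ Z, (d b - t * c b) • φ b := by
    refine (Finset.sum_subset Finset.sdiff_subset (fun b hb hbn => ?_)).symm
    have hbZ : b ∈ Z := by
      by_contra hbz
      exact hbn (Finset.mem_sdiff.2 ⟨hb, hbz⟩)
    rw [hZdef, Finset.mem_filter] at hbZ
    rw [hbZ.2.2, sub_self, zero_smul]
  have hrel : φ f = t • φ e + ∑ b ∈ Bf \ Z, (d b - t * c b) • φ b := by
    rw [← h2, h1]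
    abel
  -- e is not spanned by B \ Z (else contradiction with e being k-loose)
  have heSpan : φ e ∉ Submodule.span F (φ '' ↑(Bf \ Z)) := by
    intro hsp
    have hdep : M.Dep (insert e ↑(Bf \ Z)) := by
      refine ⟨?_, Set.insert_subset heE hBZE⟩
      intro hind
      have hli := (hφ _ (Set.insert_subset heE hBZE)).1 hind
      exact ((linearIndepOn_insert (f := φ) (fun h => heBZ (Finset.mem_coe.1 h))).1
        hli).2 hsp
    have := M.kloose_bound he (Bf \ Z) hBZind heBZ hdep
    rw [hrk] at this
    have hcard : (Bf \ Z).card = r - Z.card := by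
      rw [Finset.card_sdiff_of_subset hZB]
    rw [hrk] at hr
    omega
  -- hence T = insert e (B \ Z) is independent
  set T : Set α := insert e ↑(Bf \ Z) with hTdef
  have hTE : T ⊆ M.E := Set.insert_subset heE hBZE
  have hTind : M.Indep T := by
    refine (hφ T hTE).2 ?_
    refine (linearIndepOn_insert (f := φ) (fun h => heBZ (Finset.mem_coe.1 h))).2
      ⟨(hφ _ hBZE).1 hBZind, heSpan⟩
  have hfT : f ∉ T := by
    intro h
    rcases Set.mem_insert_iff.1 h with h1 | h2
    · exact hef h1.symm
    · exact hfBZ (Finset.mem_coe.1 h2)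
  -- but f is spanned by T, giving a small circuit through f
  have hdepT : M.Dep (insert f T) := by
    refine ⟨?_, Set.insert_subset hfE hTE⟩
    intro hind
    have hli := (hφ _ (Set.insert_subset hfE hTE)).1 hind
    refine ((linearIndepOn_insert (f := φ) hfT).1 hli).2 ?_
    rw [hrel]
    refine Submodule.add_mem _ (Submodule.smul_mem _ _ (Submodule.subset_span
      (Set.mem_image_of_mem φ (Set.mem_insert e _)))) ?_
    exact Submodule.sum_smul_mem _ _ (fun b hb => Submodule.subset_span
      (Set.mem_image_of_mem φ (Set.mem_insert_of_mem e (Finset.mem_coe.2 hb))))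
  have hTcoe : T = ↑(insert e (Bf \ Z)) := by
    rw [Finset.coe_insert]
  have := M.kloose_bound hf (insert e (Bf \ Z)) (hTcoe ▸ hTind)
    (by rw [Finset.mem_insert]; push_neg; exact ⟨hef.symm, hfBZ⟩)
    (by rw [← hTcoe]; exact hdepT)
  rw [hrk] at this hr
  have hcard1 : (insert e (Bf \ Z)).card ≤ (Bf \ Z).card + 1 := Finset.card_insert_le _ _
  have hcard2 : (Bf \ Z).card = r - Z.card := Finset.card_sdiff_of_subset hZB
  omega

end Matroid

/-- A simple `GF(q)`-representable matroid with no coloops having two distinct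
`k`-loose elements `e` and `f` satisfies `r(M) ≤ (q+1)(k-1) + 2q`, or `{e, f}` is
a cocircuit of `M`. -/
theorem rank_bound_two_loose {α : Type*} (q k : ℕ) (hq : IsPrimePow q)
    (F : Type) [Field F] [Fintype F] (hF : Fintype.card F = q)
    (M : Matroid α) [M.Finite] (hsimple : M.Simple)
    (hrep : M.RepresentableOver F) (hcoloop : ∀ x, ¬ M.Coloop x)
    (e f : α) (hef : e ≠ f) (he : M.KLoose k e) (hf : M.KLoose k f) :
    (M.rk : ℤ) ≤ (q + 1) * (k - 1) + 2 * q ∨ M✶.Circuit {e, f} := by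
  classical
  by_cases hbound : (M.rk : ℤ) ≤ (q + 1) * (k - 1) + 2 * q
  · exact Or.inl hbound
  right
  push_neg at hbound
  have hr : (q + 1) * k + q ≤ M.rk := by
    have h2 : ((q + 1) * k + q : ℤ) ≤ (M.rk : ℤ) := by nlinarith [hbound]
    exact_mod_cast h2
  have heE := he.1
  have hfE := hf.1
  constructor
  · refine ⟨?_, by rw [Matroid.dual_ground]
                   exact Set.insert_subset heE (Set.singleton_subset_iff.2 hfE)⟩
    intro hind
    rw [Matroid.dual_indep_iff_exists'] at hind
    obtain ⟨-, B, hB, hdisj⟩ := hind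
    have heB : e ∉ B := Set.disjoint_left.1 hdisj (Set.mem_insert _ _)
    have hfB : f ∉ B := Set.disjoint_left.1 hdisj (Set.mem_insert_of_mem _ rfl)
    exact Matroid.main_contradiction q k F hF M hrep e f hef he hf B hB heB hfB hr
  · intro D hD
    have hsing : ∀ x, x ∈ M.E → M✶.Indep {x} := by
      intro x hx
      have h := hcoloop x
      unfold Matroid.Coloop at h
      push_neg at h
      obtain ⟨B, hB, hxB⟩ := h hx
      rw [Matroid.dual_indep_iff_exists']
      exact ⟨Set.singleton_subset_iff.2 hx, B, hB, Set.disjoint_singleton_left.2 hxB⟩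
    have hmem : e ∉ D ∨ f ∉ D := by
      by_contra hcon
      push_neg at hcon
      exact hD.ne (Set.Subset.antisymm hD.subset
        (Set.insert_subset hcon.1 (Set.singleton_subset_iff.2 hcon.2)))
    rcases hmem with hh | hh
    · have hDf : D ⊆ {f} := by
        intro x hx
        rcases hD.subset hx with h1 | h2
        · exact absurd (h1 ▸ hx) hh
        · exact h2
      exact (hsing f hfE).subset hDf
    · have hDe : D ⊆ {e} := by
        intro x hx
        rcases hD.subset hx with h1 | h2
        · exact h1
        · exact absurd (h2 ▸ hx) hh
      exact (hsing e heE).subset hDe
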